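/- arXiv:1911.03316 — 2 statements merged into one kernel-verified Lean document; each statement's English description precedes it below -/
import Mathlib

section
/- Let m ≥ 1, u ≥ 1, j, j' be integers with 0 ≤ j ≤ m, 0 ≤ j' ≤ um, and j' ≡ j (mod 2). Then −φ(m,j,(j'−j)/2) = min( −φ(m,j,−(j'+j)/2 − 1), u − φ(m,j,−(j'+j)/2 + 1) ) holds if and only if one of the following three conditions is satisfied: (A1) m > 1 and j' ≤ j − 2; (B1) m > 1, u is even, and j' ≥ um − j + 1; (C1) m > 1, u is odd, and j' ≥ m(u−1) + j + 2. -/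
/-- The δ-coefficient function `φ(m,j,k)` for type `A₁⁽¹⁾`: writing `k = m*q + r` by
Euclidean division (`0 ≤ r < m` when `1 ≤ m`), set `φ(m,j,k) = -q*(k+r+j) - r` if
`0 ≤ r ≤ m - j`, and `φ(m,j,k) = -q*(k+r+j) + m - j - 2*r` if `m - j ≤ r < m`
(the two expressions agree at `r = m - j`). -/
def phi (m j k : ℤ) : ℤ :=
  -(k.ediv m) * (k + k.emod m + j) +
    (if k.emod m ≤ m - j then -(k.emod m) else m - j - 2 * (k.emod m))

lemma my_ediv_eq (m v x : ℤ) (hm : 0 < m) (h1 : m * v ≤ x) (h2 : x < m * (v + 1)) :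
    x.ediv m = v := by
  have := (Int.ediv_emod_unique (a := x) (b := m) (r := x - m * v) (q := v) hm).mpr
    ⟨by ring, by linarith, by linarith⟩
  exact this.1

lemma my_emod_eq (m v x : ℤ) (hm : 0 < m) (h1 : m * v ≤ x) (h2 : x < m * (v + 1)) :
    x.emod m = x - m * v := by
  have := (Int.ediv_emod_unique (a := x) (b := m) (r := x - m * v) (q := v) hm).mpr
    ⟨by ring, by linarith, by linarith⟩
  exact this.2

lemma phi_eval (m j q r : ℤ) (hm : 0 < m) (h0 : 0 ≤ r) (h1 : r < m) :
    phi m j (m * q + r) = -q * (m * q + r + r + j) +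
      (if r ≤ m - j then -r else m - j - 2 * r) := by
  have hd : (m * q + r).ediv m = q :=
    my_ediv_eq m q _ hm (by linarith) (by nlinarith)
  have he : (m * q + r).emod m = r := by
    have := my_emod_eq m q (m * q + r) hm (by linarith) (by nlinarith)
    simpa using this
  rw [phi, hd, he]

lemma exists_qr (m x : ℤ) (hm : 0 < m) : ∃ q r, 0 ≤ r ∧ r < m ∧ x = m * q + r :=
  ⟨x.ediv m, x.emod m, Int.emod_nonneg x (by omega), Int.emod_lt_of_pos x hm,
    (Int.mul_ediv_add_emod x m).symm⟩

lemma ediv_bound (m x : ℤ) (hm : 0 < m) :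
    m * (x.ediv m) ≤ x ∧ x < m * (x.ediv m) + m := by
  obtain ⟨q, r, hr0, hrm, rfl⟩ := exists_qr m x hm
  rw [my_ediv_eq m q _ hm (by linarith) (by nlinarith)]
  constructor <;> linarith

lemma phi_neg (m j k : ℤ) (hm : 0 < m) (hj0 : 0 ≤ j) (hjm : j ≤ m) :
    phi m j (-j - k) = phi m j k := by
  obtain ⟨q, r, hr0, hrm, rfl⟩ := exists_qr m k hm
  rw [phi_eval m j q r hm hr0 hrm]
  rcases le_or_gt (j + r) m with hcase | hcase
  · rcases eq_or_lt_of_le (show 0 ≤ j + r by omega) with hzero | hpos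
    · -- j = 0, r = 0
      have hj : j = 0 := by omega
      have hr : r = 0 := by omega
      subst hj; subst hr
      rw [show -(0:ℤ) - (m * q + 0) = m * (-q) + 0 from by ring,
        phi_eval m 0 (-q) 0 hm le_rfl hm]
      split_ifs <;> first | ring1 | omega | (exfalso; omega)
    · rw [show -j - (m * q + r) = m * (-q - 1) + (m - j - r) from by ring,
        phi_eval m j (-q - 1) (m - j - r) hm (by omega) (by omega)]
      split_ifs <;> first | ring1 | omega | (exfalso; omega)
  · rw [show -j - (m * q + r) = m * (-q - 2) + (2 * m - j - r) from by ring,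
      phi_eval m j (-q - 2) (2 * m - j - r) hm (by omega) (by omega)]
    split_ifs <;> first | ring1 | omega | (exfalso; omega)

lemma phi_step (m j d : ℤ) (hm : 0 < m) (hj0 : 0 ≤ j) (hjm : j ≤ m) :
    phi m j d - phi m j (d + 1) = d.ediv m + (d + j).ediv m + 1 := by
  obtain ⟨q, r, hr0, hrm, rfl⟩ := exists_qr m d hm
  have hdq : (m * q + r).ediv m = q := my_ediv_eq m q _ hm (by linarith) (by nlinarith)
  rw [hdq, phi_eval m j q r hm hr0 hrm]
  rcases lt_or_ge (r + j) m with hc | hc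
  · have hdj : (m * q + r + j).ediv m = q := by
      apply my_ediv_eq m q _ hm (by linarith) (by nlinarith)
    rw [hdj]
    rcases lt_or_ge r (m - 1) with hr1 | hr1
    · rw [show m * q + r + 1 = m * q + (r + 1) from by ring,
        phi_eval m j q (r + 1) hm (by omega) (by omega)]
      split_ifs <;> first | ring1 | omega | (exfalso; omega)
    · -- r = m-1, hence j = 0
      have hr : r = m - 1 := by omega
      have hj : j = 0 := by omega
      subst hj; subst hr
      rw [show m * q + (m - 1) + 1 = m * (q + 1) + 0 from by ring,
        phi_eval m 0 (q + 1) 0 hm le_rfl hm]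
      split_ifs <;> first | ring1 | omega | (exfalso; omega)
  · have hdj : (m * q + r + j).ediv m = q + 1 := by
      apply my_ediv_eq m (q + 1) _ hm (by nlinarith) (by nlinarith)
    rw [hdj]
    rcases lt_or_ge r (m - 1) with hr1 | hr1
    · rw [show m * q + r + 1 = m * q + (r + 1) from by ring,
        phi_eval m j q (r + 1) hm (by omega) (by omega)]
      rcases eq_or_lt_of_le hc with heq | hlt
      · have : r = m - j := by omega
        subst this
        split_ifs <;> first | ring1 | omega | (exfalso; omega)
      · split_ifs <;> first | ring1 | omega | (exfalso; omega)
    · have hr : r = m - 1 := by omega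
      subst hr
      rw [show m * q + (m - 1) + 1 = m * (q + 1) + 0 from by ring,
        phi_eval m j (q + 1) 0 hm le_rfl hm]
      rcases eq_or_lt_of_le hc with heq | hlt
      · have : j = 1 := by omega
        subst this
        split_ifs <;> first | ring1 | omega | (exfalso; omega)
      · split_ifs <;> first | ring1 | omega | (exfalso; omega)

lemma Q_iff (m j j' d : ℤ) (hm : 1 ≤ m) (hj0 : 0 ≤ j) (hjm : j ≤ m) (hj'0 : 0 ≤ j')
    (hd : j' - j = 2 * d) :
    d.ediv m + (d + j).ediv m + 1 = 0 ↔ (1 < m ∧ j' ≤ j - 2) := by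
  have hm0 : (0:ℤ) < m := hm
  constructor
  · intro h
    have he2 : 0 ≤ (d + j).ediv m := Int.ediv_nonneg (by omega) (by omega)
    have hd1 : d < 0 := by
      by_contra hcon
      push_neg at hcon
      have : 0 ≤ d.ediv m := Int.ediv_nonneg hcon (by omega)
      omega
    omega
  · rintro ⟨hm1, hj'⟩
    have he1 : d.ediv m = -1 := my_ediv_eq m (-1) d hm0 (by omega) (by omega)
    have he2 : (d + j).ediv m = 0 := my_ediv_eq m 0 (d + j) hm0 (by omega) (by omega)
    omega

lemma P_iff (m u j j' d : ℤ) (hm : 1 ≤ m) (hu : 1 ≤ u) (hj0 : 0 ≤ j) (hjm : j ≤ m)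
    (hj'0 : 0 ≤ j') (hj'um : j' ≤ u * m) (hd : j' - j = 2 * d) :
    (d - 1).ediv m + (d + j - 1).ediv m + 1 = u ↔
      (1 < m ∧ Even u ∧ u * m - j + 1 ≤ j') ∨ (1 < m ∧ Odd u ∧ m * (u - 1) + j + 2 ≤ j') := by
  have hm0 : (0:ℤ) < m := hm
  have hmono : (d - 1).ediv m ≤ (d + j - 1).ediv m := Int.ediv_le_ediv hm0 (by omega)
  have hstep : (d + j - 1).ediv m ≤ (d - 1).ediv m + 1 := by
    have h2 : (d + j - 1) ≤ (d - 1) + 1 * m := by omega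
    have h3 := Int.ediv_le_ediv hm0 h2
    rwa [Int.add_mul_ediv_right _ _ (by omega : m ≠ 0)] at h3
  have hbd1 := ediv_bound m (d - 1) hm0
  have hbd2 := ediv_bound m (d + j - 1) hm0
  rcases Int.even_or_odd u with ⟨v, hv⟩ | ⟨v, hv⟩
  · -- u = v + v (even)
    have hEven : Even u := ⟨v, hv⟩
    have hNotOdd : ¬ Odd u := Int.not_odd_iff_even.mpr hEven
    have hv1 : 1 ≤ v := by omega
    have hum : u * m = 2 * (m * v) := by rw [hv]; ring
    obtain ⟨w, hw⟩ : ∃ w : ℤ, m * v = w := ⟨m * v, rfl⟩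
    have hwm : m * (v - 1) = w - m := by rw [← hw]; ring
    have hwp : m * (v + 1) = w + m := by rw [← hw]; ring
    rw [hum, hw] at hj'um
    constructor
    · intro h
      left
      have hf1 : (d - 1).ediv m = v - 1 := by omega
      have hf2 : (d + j - 1).ediv m = v := by omega
      rw [hf1, hwm] at hbd1
      rw [hf2, hw] at hbd2
      rw [hum, hw]
      refine ⟨?_, hEven, ?_⟩ <;> omega
    · rintro (⟨hm1, _, hjge⟩ | ⟨_, hOdd, _⟩)
      · rw [hum, hw] at hjge
        have hf1 : (d - 1).ediv m = v - 1 := by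
          apply my_ediv_eq m (v - 1) _ hm0
          · rw [hwm]; omega
          · rw [show v - 1 + 1 = v from by ring, hw]; omega
        have hf2 : (d + j - 1).ediv m = v := by
          apply my_ediv_eq m v _ hm0
          · rw [hw]; omega
          · rw [hwp]; omega
        omega
      · exact absurd hOdd hNotOdd
  · -- u = 2*v + 1 (odd)
    have hOdd : Odd u := ⟨v, hv⟩
    have hNotEven : ¬ Even u := Int.not_even_iff_odd.mpr hOdd
    have hv0 : 0 ≤ v := by omega
    have hum : u * m = 2 * (m * v) + m := by rw [hv]; ring
    have hum1 : m * (u - 1) = 2 * (m * v) := by rw [hv]; ring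
    obtain ⟨w, hw⟩ : ∃ w : ℤ, m * v = w := ⟨m * v, rfl⟩
    have hwp : m * (v + 1) = w + m := by rw [← hw]; ring
    rw [hum, hw] at hj'um
    constructor
    · intro h
      right
      have hf1 : (d - 1).ediv m = v := by omega
      have hf2 : (d + j - 1).ediv m = v := by omega
      rw [hf1, hw] at hbd1
      rw [hf2, hw] at hbd2
      rw [hum1, hw]
      refine ⟨?_, hOdd, ?_⟩ <;> omega
    · rintro (⟨_, hEven, _⟩ | ⟨hm1, _, hjge⟩)
      · exact absurd hEven hNotEven
      · rw [hum1, hw] at hjge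
        have hf1 : (d - 1).ediv m = v := by
          apply my_ediv_eq m v _ hm0
          · rw [hw]; omega
          · rw [hwp]; omega
        have hf2 : (d + j - 1).ediv m = v := by
          apply my_ediv_eq m v _ hm0
          · rw [hw]; omega
          · rw [hwp]; omega
        omega


/-- Proposition 4.5 of the paper: for `m, u ≥ 1`, `0 ≤ j ≤ m`, `0 ≤ j' ≤ um`,
`j' ≡ j (mod 2)`, equality
`−φ(m,j,(j'−j)/2) = min(−φ(m,j,−(j'+j)/2 − 1), u − φ(m,j,−(j'+j)/2 + 1))`
holds iff (A1) `m > 1` and `j' ≤ j − 2`, or (B1) `m > 1`, `u` even and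
`j' ≥ um − j + 1`, or (C1) `m > 1`, `u` odd and `j' ≥ m(u−1) + j + 2`. -/
theorem phi_min_equality_iff (m u j j' : ℤ) (hm : 1 ≤ m) (hu : 1 ≤ u)
    (hj0 : 0 ≤ j) (hjm : j ≤ m) (hj'0 : 0 ≤ j') (hj'um : j' ≤ u * m)
    (hpar : 2 ∣ j' - j) :
    (-phi m j ((j' - j) / 2) =
        min (-phi m j (-((j' + j) / 2) - 1)) (u - phi m j (-((j' + j) / 2) + 1))) ↔
      (1 < m ∧ j' ≤ j - 2) ∨
      (1 < m ∧ Even u ∧ u * m - j + 1 ≤ j') ∨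
      (1 < m ∧ Odd u ∧ m * (u - 1) + j + 2 ≤ j') := by
  have hm0 : (0:ℤ) < m := hm
  obtain ⟨d, hd⟩ := hpar
  have hk1 : (j' - j) / 2 = d := by omega
  have hk2 : -((j' + j) / 2) - 1 = -j - (d + 1) := by omega
  have hk3 : -((j' + j) / 2) + 1 = -j - (d - 1) := by omega
  rw [hk1, hk2, hk3, phi_neg m j (d + 1) hm0 hj0 hjm, phi_neg m j (d - 1) hm0 hj0 hjm]
  have hQ := phi_step m j d hm0 hj0 hjm
  have hP := phi_step m j (d - 1) hm0 hj0 hjm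
  rw [show d - 1 + 1 = d from by ring, show d - 1 + j = d + j - 1 from by ring] at hP
  have hmono1 : (d - 1).ediv m ≤ d.ediv m := Int.ediv_le_ediv hm0 (by omega)
  have hmono2 : (d + j - 1).ediv m ≤ (d + j).ediv m := Int.ediv_le_ediv hm0 (by omega)
  have hmain : (-phi m j d = min (-phi m j (d + 1)) (u - phi m j (d - 1))) ↔
      (d.ediv m + (d + j).ediv m + 1 = 0 ∨ (d - 1).ediv m + (d + j - 1).ediv m + 1 = u) := by
    generalize phi m j d = a at *
    generalize phi m j (d + 1) = b at *
    generalize phi m j (d - 1) = c at *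
    generalize d.ediv m = e1 at *
    generalize (d + j).ediv m = e2 at *
    generalize (d - 1).ediv m = f1 at *
    generalize (d + j - 1).ediv m = f2 at *
    omega
  rw [hmain, Q_iff m j j' d hm hj0 hjm hj'0 hd,
    P_iff m u j j' d hm hu hj0 hjm hj'0 hj'um hd]
end

section
/- Let m ≥ 1 be an integer, u ≥ 1 an odd integer, and j, j' integers with 0 ≤ j ≤ m/2 and 0 ≤ j' ≤ um/2. For n ∈ ℤ define N(n) = −ψ(m,j,−(j'+j)/2 − 1 + n(um+3)/2) + u·n·(j' + 1 − n(um+3)/2). Then N, viewed as a function of n ∈ ℤ, attains its minimum at n = 0 or n = 1; i.e., N(n) ≥ min(N(0), N(1)) for every n ∈ ℤ. -/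
open Classical in
/-- The δ-coefficient function `ψ(m,j,k)` for type `A₂⁽²⁾`, for half-integer
arguments `k ∈ (1/2)ℤ`: writing `k = (m/2)*q + r` with `q ∈ ℤ` and `0 ≤ r < m/2`
(so `q = ⌊2k/m⌋` when `1 ≤ m`), set `ψ(m,j,k) = -q*(k+r+j) + c(r)` where
`c(r) = -r` if `0 ≤ r ≤ m/2 - j`; `c(r) = m/2 - j - 2r` if `m/2 - j ≤ r < m/2`
and `r - m/2 ∈ ℤ`; `c(r) = (m-1)/2 - j - 2r` if `(m-1)/2 - j ≤ r < m/2` and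
`r - (m-1)/2 ∈ ℤ` (these expressions agree on overlaps). -/
noncomputable def psi (m j : ℤ) (k : ℚ) : ℚ :=
  let q : ℤ := ⌊2 * k / (m : ℚ)⌋
  let r : ℚ := k - (m : ℚ) / 2 * (q : ℚ)
  (-(q : ℚ)) * (k + r + (j : ℚ)) +
    (if r ≤ (m : ℚ) / 2 - (j : ℚ) then -r
     else if ∃ t : ℤ, r - (m : ℚ) / 2 = (t : ℚ) then (m : ℚ) / 2 - (j : ℚ) - 2 * r
     else ((m : ℚ) - 1) / 2 - (j : ℚ) - 2 * r)



/-- integer version of the `c`-value (times `-2`): `Gc m j r = -2*c(r/2)`. -/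
def Gc (m j r : ℤ) : ℤ :=
  if r + 2 * j ≤ m then r
  else 2 * r + 2 * j - m + (if (m - r) % 2 = 0 then 0 else 1)

/-- integer version of `-2*ψ(m,j,x/2)`. -/
def Gf (m j x : ℤ) : ℤ :=
  m * (x / m) ^ 2 + 2 * (x / m) * (x % m + j) + Gc m j (x % m)

lemma Gc_cases (m j r : ℤ) :
    (r + 2 * j ≤ m ∧ Gc m j r = r) ∨
    (m < r + 2 * j ∧ 2 * r + 2 * j - m ≤ Gc m j r ∧ Gc m j r ≤ 2 * r + 2 * j - m + 1) := by
  unfold Gc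
  split_ifs <;> omega

lemma step_abstract (m j p ρ p' ρ' : ℤ) (hm : 1 ≤ m) (hj0 : 0 ≤ j) (hjm : 2 * j ≤ m)
    (hρ0 : 0 ≤ ρ) (hρm : ρ < m) (hρ0' : 0 ≤ ρ') (hρm' : ρ' < m)
    (hrel : m * p' + ρ' = m * p + ρ + 3) :
    6 * p + 3 ≤ (m * p' ^ 2 + 2 * p' * (ρ' + j) + Gc m j ρ') -
        (m * p ^ 2 + 2 * p * (ρ + j) + Gc m j ρ) ∧
      (m * p' ^ 2 + 2 * p' * (ρ' + j) + Gc m j ρ') -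
        (m * p ^ 2 + 2 * p * (ρ + j) + Gc m j ρ) ≤ 6 * p + 11 := by
  obtain ⟨w, rfl⟩ : ∃ w, p' = p + w := ⟨p' - p, by ring⟩
  have hmw : m * w = ρ - ρ' + 3 := by linear_combination hrel
  have hC := Gc_cases m j ρ
  have hC' := Gc_cases m j ρ'
  have hdiff : (m * (p + w) ^ 2 + 2 * (p + w) * (ρ' + j) + Gc m j ρ') -
      (m * p ^ 2 + 2 * p * (ρ + j) + Gc m j ρ)
      = 6 * p + w * (ρ + ρ' + 3 + 2 * j) + Gc m j ρ' - Gc m j ρ := by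
    linear_combination (2 * p + w) * hmw
  rw [hdiff]
  have hw0 : 0 ≤ w := by nlinarith
  have hw3 : w ≤ 3 := by nlinarith
  interval_cases w <;> omega

lemma Gf_step (m j x : ℤ) (hm : 1 ≤ m) (hj0 : 0 ≤ j) (hjm : 2 * j ≤ m) :
    6 * (x / m) + 3 ≤ Gf m j (x + 3) - Gf m j x ∧
      Gf m j (x + 3) - Gf m j x ≤ 6 * (x / m) + 11 := by
  have hmm : m ≠ 0 := by omega
  have h1 : m * (x / m) + x % m = x := Int.mul_ediv_add_emod x m
  have h2 : m * ((x + 3) / m) + (x + 3) % m = x + 3 := Int.mul_ediv_add_emod (x + 3) m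
  have := step_abstract m j (x / m) (x % m) ((x + 3) / m) ((x + 3) % m) hm hj0 hjm
    (Int.emod_nonneg x hmm) (Int.emod_lt_of_pos x (by omega))
    (Int.emod_nonneg (x + 3) hmm) (Int.emod_lt_of_pos (x + 3) (by omega))
    (by omega)
  exact this

/-- the integer-valued `2*N(n)`. -/
def fInt (m u j a n : ℤ) : ℤ := u * (3 * n ^ 2 - 2 * n) + Gf m j (3 * n - a)

lemma fInt_step_up (m u j a : ℤ) (hm : 1 ≤ m) (hu : 1 ≤ u) (hj0 : 0 ≤ j) (hjm : 2 * j ≤ m)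
    (ha : 2 ≤ a) (hub : 2 * a ≤ (u + 1) * m + 4) (n : ℤ) (hn : 1 ≤ n) :
    fInt m u j a n ≤ fInt m u j a (n + 1) := by
  have harg : 3 * (n + 1) - a = (3 * n - a) + 3 := by ring
  unfold fInt
  rw [harg]
  set x := 3 * n - a with hx
  obtain ⟨hlo, _⟩ := Gf_step m j x hm hj0 hjm
  have hdm : m * (x / m) + x % m = x := Int.mul_ediv_add_emod x m
  have hr0 : 0 ≤ x % m := Int.emod_nonneg x (by omega)
  have hrm : x % m < m := Int.emod_lt_of_pos x (by omega)
  have hx3 : 3 - a ≤ x := by omega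
  have h4 : 4 ≤ m * (2 * (x / m) + u + 3) := by nlinarith [hdm, hr0, hrm, hub, hx3]
  have hp1 : -3 * u - 6 ≤ 6 * (x / m) := by
    by_contra h
    push_neg at h
    have hneg : 2 * (x / m) + u + 3 ≤ 0 := by omega
    nlinarith [h4]
  have hun : 7 * u ≤ u * (6 * n + 1) := by nlinarith
  nlinarith [hlo, hp1, hun]

lemma fInt_step_down (m u j a : ℤ) (hm : 1 ≤ m) (hu : 1 ≤ u) (hj0 : 0 ≤ j) (hjm : 2 * j ≤ m)
    (ha : 2 ≤ a) (n : ℤ) (hn : n ≤ 0) :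
    fInt m u j a n ≤ fInt m u j a (n - 1) := by
  have harg : 3 * n - a = (3 * (n - 1) - a) + 3 := by ring
  unfold fInt
  rw [harg]
  set x := 3 * (n - 1) - a with hx
  obtain ⟨_, hhi⟩ := Gf_step m j x hm hj0 hjm
  have hdm : m * (x / m) + x % m = x := Int.mul_ediv_add_emod x m
  have hr0 : 0 ≤ x % m := Int.emod_nonneg x (by omega)
  have hxneg : x ≤ -5 := by omega
  have hp1 : x / m ≤ -1 := by nlinarith [hdm, hr0]
  have hun : 5 - 6 * n ≤ u * (5 - 6 * n) := by nlinarith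
  nlinarith [hhi, hp1, hun]

lemma fInt_min (m u j a : ℤ) (hm : 1 ≤ m) (hu : 1 ≤ u) (hj0 : 0 ≤ j) (hjm : 2 * j ≤ m)
    (ha : 2 ≤ a) (hub : 2 * a ≤ (u + 1) * m + 4) (n : ℤ) :
    min (fInt m u j a 0) (fInt m u j a 1) ≤ fInt m u j a n := by
  rcases le_or_gt 1 n with h | h
  · have key : ∀ k : ℤ, 1 ≤ k → fInt m u j a 1 ≤ fInt m u j a k :=
      Int.le_induction (le_refl _)
        (fun k hk ih => ih.trans (fInt_step_up m u j a hm hu hj0 hjm ha hub k hk))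
    exact (min_le_right _ _).trans (key n h)
  · have h0 : n ≤ 0 := by omega
    have key : ∀ k : ℤ, k ≤ 0 → fInt m u j a 0 ≤ fInt m u j a k :=
      Int.le_induction_down (le_refl _)
        (fun k hk ih => ih.trans (fInt_step_down m u j a hm hu hj0 hjm ha k hk))
    exact (min_le_left _ _).trans (key n h0)


lemma psi_eq_Gf (m j x : ℤ) (hm : 1 ≤ m) :
    psi m j ((x : ℚ) / 2) = -(Gf m j x : ℚ) / 2 := by
  have hm0 : (0 : ℚ) < (m : ℚ) := by exact_mod_cast hm
  have hdm : m * (x / m) + x % m = x := Int.mul_ediv_add_emod x m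
  have hr0 : 0 ≤ x % m := Int.emod_nonneg x (by omega)
  have hrm : x % m < m := Int.emod_lt_of_pos x (by omega)
  have hxq : (x : ℚ) = (m : ℚ) * ((x / m : ℤ) : ℚ) + ((x % m : ℤ) : ℚ) := by
    exact_mod_cast congrArg (fun t : ℤ => (t : ℚ)) hdm.symm
  have hq : ⌊2 * ((x : ℚ) / 2) / (m : ℚ)⌋ = x / m := by
    have h2 : 2 * ((x : ℚ) / 2) / (m : ℚ) = (x : ℚ) / (m : ℚ) := by ring
    have hr0q : (0 : ℚ) ≤ ((x % m : ℤ) : ℚ) := by exact_mod_cast hr0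
    have hrmq : ((x % m : ℤ) : ℚ) < (m : ℚ) := by exact_mod_cast hrm
    rw [h2, Int.floor_eq_iff]
    constructor
    · rw [le_div_iff₀ hm0]
      nlinarith [hxq, hr0q]
    · rw [div_lt_iff₀ hm0]
      push_cast
      nlinarith [hxq, hrmq]
  simp only [psi]
  rw [hq]
  have hrEq : (x : ℚ) / 2 - (m : ℚ) / 2 * ((x / m : ℤ) : ℚ) = ((x % m : ℤ) : ℚ) / 2 := by
    rw [hxq]; ring
  rw [hrEq]
  have hGf : Gf m j x = m * (x / m) ^ 2 + 2 * (x / m) * (x % m + j) + Gc m j (x % m) := rfl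
  have hiff : (∃ t : ℤ, ((x % m : ℤ) : ℚ) / 2 - (m : ℚ) / 2 = (t : ℚ)) ↔ (m - x % m) % 2 = 0 := by
    constructor
    · rintro ⟨t, ht⟩
      have h2 : ((x % m : ℤ) : ℚ) - (m : ℚ) = 2 * (t : ℚ) := by linarith
      have h3 : x % m - m = 2 * t := by exact_mod_cast h2
      omega
    · intro h
      refine ⟨(x % m - m) / 2, ?_⟩
      have h2 : 2 * ((x % m - m) / 2) = x % m - m := by omega
      have h3 := congrArg (fun t : ℤ => (t : ℚ)) h2
      push_cast at h3
      linarith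
  by_cases hb : ((x % m : ℤ) : ℚ) / 2 ≤ (m : ℚ) / 2 - (j : ℚ)
  · have hbz : x % m + 2 * j ≤ m := by
      have : ((x % m : ℤ) : ℚ) + 2 * (j : ℚ) ≤ (m : ℚ) := by linarith
      exact_mod_cast this
    have hgc : Gc m j (x % m) = x % m := by unfold Gc; rw [if_pos hbz]
    rw [if_pos hb, hGf, hgc]
    push_cast
    linear_combination (-(((x / m : ℤ) : ℚ)) / 2) * hxq
  · have hbz : m < x % m + 2 * j := by
      push_neg at hb
      have : (m : ℚ) < ((x % m : ℤ) : ℚ) + 2 * (j : ℚ) := by linarith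
      exact_mod_cast this
    by_cases hpar : (∃ t : ℤ, ((x % m : ℤ) : ℚ) / 2 - (m : ℚ) / 2 = (t : ℚ))
    · have hgc : Gc m j (x % m) = 2 * (x % m) + 2 * j - m := by
        unfold Gc
        rw [if_neg (by omega), if_pos (hiff.mp hpar)]
        ring
      rw [if_neg hb, if_pos hpar, hGf, hgc]
      push_cast
      linear_combination (-(((x / m : ℤ) : ℚ)) / 2) * hxq
    · have hgc : Gc m j (x % m) = 2 * (x % m) + 2 * j - m + 1 := by
        unfold Gc
        rw [if_neg (by omega), if_neg (fun h => hpar (hiff.mpr h))]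
      rw [if_neg hb, if_neg hpar, hGf, hgc]
      push_cast
      linear_combination (-(((x / m : ℤ) : ℚ)) / 2) * hxq

lemma Gf_shift (m j y t : ℤ) (hm : m ≠ 0) :
    Gf m j (y + m * t) = Gf m j y + 2 * m * (y / m) * t + m * t ^ 2 + 2 * t * (y % m + j) := by
  unfold Gf
  rw [Int.add_mul_ediv_left y t hm, Int.add_mul_emod_self_left]
  ring

/-- For `m ≥ 1`, `u ≥ 1` odd, `0 ≤ j ≤ m/2`, `0 ≤ j' ≤ um/2`, the function
`N(n) = −ψ(m,j,−(j'+j)/2 − 1 + n(um+3)/2) + u·n·(j' + 1 − n(um+3)/2)` attains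
its minimum over `n ∈ ℤ` at `n = 0` or `n = 1`. -/
theorem psi_N_min_at_zero_or_one (m u j j' : ℤ) (hm : 1 ≤ m) (hu : 1 ≤ u) (huodd : Odd u)
    (hj0 : 0 ≤ j) (hjm : 2 * j ≤ m) (hj'0 : 0 ≤ j') (hj'um : 2 * j' ≤ u * m) :
    ∀ n : ℤ,
      min (-psi m j (-(((j' : ℚ) + (j : ℚ)) / 2) - 1))
          (-psi m j (-(((j' : ℚ) + (j : ℚ)) / 2) - 1 + ((u : ℚ) * (m : ℚ) + 3) / 2) +
            (u : ℚ) * ((j' : ℚ) + 1 - ((u : ℚ) * (m : ℚ) + 3) / 2)) ≤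
        -psi m j (-(((j' : ℚ) + (j : ℚ)) / 2) - 1 + (n : ℚ) * ((u : ℚ) * (m : ℚ) + 3) / 2) +
          (u : ℚ) * (n : ℚ) * ((j' : ℚ) + 1 - (n : ℚ) * ((u : ℚ) * (m : ℚ) + 3) / 2) := by
  set a : ℤ := j' + j + 2 with ha_def
  have ha : 2 ≤ a := by omega
  have hub : 2 * a ≤ (u + 1) * m + 4 := by nlinarith
  -- key identity for each n
  have key : ∀ n : ℤ,
      -psi m j (-(((j' : ℚ) + (j : ℚ)) / 2) - 1 + (n : ℚ) * ((u : ℚ) * (m : ℚ) + 3) / 2) +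
        (u : ℚ) * (n : ℚ) * ((j' : ℚ) + 1 - (n : ℚ) * ((u : ℚ) * (m : ℚ) + 3) / 2)
      = ((fInt m u j a n : ℤ) : ℚ) / 2 := by
    intro n
    set y : ℤ := 3 * n - a with hy
    have hmne : m ≠ 0 := by omega
    have harg : (-(((j' : ℚ) + (j : ℚ)) / 2) - 1 + (n : ℚ) * ((u : ℚ) * (m : ℚ) + 3) / 2)
        = (((y + m * (n * u) : ℤ) : ℚ)) / 2 := by
      push_cast [hy, ha_def]
      ring
    rw [harg, psi_eq_Gf m j (y + m * (n * u)) hm, Gf_shift m j y (n * u) hmne]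
    have hdm : m * (y / m) + y % m = y := Int.mul_ediv_add_emod y m
    have hdmq : (m : ℚ) * ((y / m : ℤ) : ℚ) + ((y % m : ℤ) : ℚ) = 3 * (n : ℚ) - ((j' : ℚ) + (j : ℚ) + 2) := by
      have := congrArg (fun t : ℤ => (t : ℚ)) hdm
      push_cast [hy, ha_def] at this
      push_cast
      linarith
    show -(-((Gf m j y + 2 * m * (y / m) * (n * u) + m * (n * u) ^ 2 + 2 * (n * u) * (y % m + j) : ℤ) : ℚ) / 2)
        + (u : ℚ) * (n : ℚ) * ((j' : ℚ) + 1 - (n : ℚ) * ((u : ℚ) * (m : ℚ) + 3) / 2)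
      = ((fInt m u j a n : ℤ) : ℚ) / 2
    have hfi : fInt m u j a n = u * (3 * n ^ 2 - 2 * n) + Gf m j y := rfl
    rw [hfi]
    push_cast
    linear_combination ((n : ℚ) * (u : ℚ)) * hdmq
  have hmin := fInt_min m u j a hm hu hj0 hjm ha hub
  intro n
  -- the two min-arguments
  have h0 := key 0
  have h1 := key 1
  have e0 : (-(((j' : ℚ) + (j : ℚ)) / 2) - 1 + ((0 : ℤ) : ℚ) * ((u : ℚ) * (m : ℚ) + 3) / 2)
      = (-(((j' : ℚ) + (j : ℚ)) / 2) - 1) := by push_cast; ring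
  rw [e0] at h0
  have h0' : -psi m j (-(((j' : ℚ) + (j : ℚ)) / 2) - 1) = ((fInt m u j a 0 : ℤ) : ℚ) / 2 := by
    push_cast at h0 ⊢
    linear_combination h0
  have e1 : (-(((j' : ℚ) + (j : ℚ)) / 2) - 1 + ((1 : ℤ) : ℚ) * ((u : ℚ) * (m : ℚ) + 3) / 2)
      = (-(((j' : ℚ) + (j : ℚ)) / 2) - 1 + ((u : ℚ) * (m : ℚ) + 3) / 2) := by push_cast; ring
  rw [e1] at h1
  have h1' : -psi m j (-(((j' : ℚ) + (j : ℚ)) / 2) - 1 + ((u : ℚ) * (m : ℚ) + 3) / 2) +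
      (u : ℚ) * ((j' : ℚ) + 1 - ((u : ℚ) * (m : ℚ) + 3) / 2) = ((fInt m u j a 1 : ℤ) : ℚ) / 2 := by
    push_cast at h1 ⊢
    linear_combination h1
  rw [h0', h1', key n]
  have hc : ((min (fInt m u j a 0) (fInt m u j a 1) : ℤ) : ℚ) ≤ ((fInt m u j a n : ℤ) : ℚ) := by
    exact_mod_cast hmin n
  rcases le_total (fInt m u j a 0) (fInt m u j a 1) with h | h
  · have h0n : ((fInt m u j a 0 : ℤ) : ℚ) ≤ ((fInt m u j a n : ℤ) : ℚ) := by
      rw [min_eq_left h] at hc; exact hc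
    have hle : ((fInt m u j a 0 : ℤ) : ℚ) / 2 ≤ ((fInt m u j a n : ℤ) : ℚ) / 2 := by linarith
    exact le_trans (min_le_left _ _) hle
  · have h1n : ((fInt m u j a 1 : ℤ) : ℚ) ≤ ((fInt m u j a n : ℤ) : ℚ) := by
      rw [min_eq_right h] at hc; exact hc
    have hle : ((fInt m u j a 1 : ℤ) : ℚ) / 2 ≤ ((fInt m u j a n : ℤ) : ℚ) / 2 := by linarith
    exact le_trans (min_le_right _ _) hle
end
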